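/- Let G be a connected bipartite graph such that every edge of G is contained in a 4-cycle of G and every two vertices of G in the same part of the bipartition have a common neighbor. Then there exist constants c₁, c₂ > 0 and n₀ such that for all n ≥ n₀, c₁ · ex(n,G) ≤ êx_3(n,G) ≤ c₂ · ex(n,G), where ex(n,G) is the classical (graph) Turán number of G. -/

import Mathlib

/-- A hypergraph `H` (given by its finite collection of hyperedges on vertex type `β`)
contains a Berge copy of the graph `G`: there is an injection of the vertices of `G`
and an injection of the edges of `G` into hyperedges of `H` such that each edge of `G`
is contained in its corresponding hyperedge. -/
def HasBergeCopy {α β : Type*} [DecidableEq β] (G : SimpleGraph α)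
    (H : Finset (Finset β)) : Prop :=
  ∃ (i : α → β) (f : Sym2 α → Finset β),
    Function.Injective i ∧ Set.InjOn f G.edgeSet ∧
    (∀ e ∈ G.edgeSet, f e ∈ H) ∧
    (∀ u v, G.Adj u v → i u ∈ f s(u, v) ∧ i v ∈ f s(u, v))

/-- The edge set of the shadow graph of a hypergraph `H`: all 2-element subsets of
vertices covered by some hyperedge of `H`. -/
def covPairs {β : Type*} [DecidableEq β] (H : Finset (Finset β)) : Finset (Finset β) :=
  H.biUnion fun h => Finset.powersetCard 2 h

/-- The `R`-cover Turán number `êx_R(n, G)`: the maximum number of edges in the shadow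
of a Berge-`G`-free `R`-graph on `n` vertices. -/
noncomputable def coverTuranNumber {α : Type*} (R : Set ℕ) (n : ℕ)
    (G : SimpleGraph α) : ℕ :=
  sSup { m | ∃ H : Finset (Finset (Fin n)),
    (∀ h ∈ H, h.card ∈ R) ∧ ¬ HasBergeCopy G H ∧ m = (covPairs H).card }

/-- The classical Turán number `ex(n, G)`: the maximum number of edges of a simple
graph on `n` vertices containing no subgraph isomorphic to `G`. -/
noncomputable def turanNumber {α : Type*} (n : ℕ) (G : SimpleGraph α) : ℕ :=
  sSup { m | ∃ F : SimpleGraph (Fin n),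
    ¬ (∃ f : G →g F, Function.Injective f) ∧ m = F.edgeSet.ncard }


section StmtNineHelpers

set_option maxHeartbeats 1600000

open Finset Function


variable {α : Type*} [Fintype α] (G : SimpleGraph α) (U : Set α)

/-- send a `Sym2` to the two-element finset of its members -/
private def pairFinset {β : Type*} [DecidableEq β] : Sym2 β → Finset β :=
  Sym2.lift ⟨fun a b => ({a, b} : Finset β), fun a b => Finset.pair_comm a b⟩

@[simp] private lemma pairFinset_mk {β : Type*} [DecidableEq β] (a b : β) :
    pairFinset s(a, b) = ({a, b} : Finset β) := rfl

private lemma sym2_of_pair_eq {β : Type*} [DecidableEq β] {a b c d : β}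
    (h : ({a, b} : Finset β) = {c, d}) : s(a, b) = s(c, d) := by
  have ha : a ∈ ({c, d} : Finset β) := by rw [← h]; simp
  have hb : b ∈ ({c, d} : Finset β) := by rw [← h]; simp
  have hc : c ∈ ({a, b} : Finset β) := by rw [h]; simp
  have hd : d ∈ ({a, b} : Finset β) := by rw [h]; simp
  simp only [Finset.mem_insert, Finset.mem_singleton] at ha hb hc hd
  rw [Sym2.eq_iff]
  rcases ha with rfl | rfl
  · rcases hb with rfl | rfl
    · rcases hd with rfl | rfl
      · exact Or.inl ⟨rfl, rfl⟩
      · exact Or.inl ⟨rfl, rfl⟩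
    · exact Or.inl ⟨rfl, rfl⟩
  · rcases hb with rfl | rfl
    · exact Or.inr ⟨rfl, rfl⟩
    · rcases hc with rfl | rfl
      · exact Or.inl ⟨rfl, rfl⟩
      · exact Or.inr ⟨rfl, rfl⟩

private lemma turan_bdd (n : ℕ) : BddAbove {m | ∃ F : SimpleGraph (Fin n),
    ¬ (∃ f : G →g F, Function.Injective f) ∧ m = F.edgeSet.ncard} := by
  refine ⟨Nat.card (Sym2 (Fin n)), ?_⟩
  rintro m ⟨F, -, rfl⟩
  have h := Set.ncard_le_ncard (Set.subset_univ F.edgeSet) Set.finite_univ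
  simpa [Set.ncard_univ] using h

private lemma cover_bdd (n : ℕ) : BddAbove { m | ∃ H : Finset (Finset (Fin n)),
    (∀ h ∈ H, h.card ∈ ({3} : Set ℕ)) ∧ ¬ HasBergeCopy G H ∧ m = (covPairs H).card } := by
  refine ⟨Fintype.card (Finset (Fin n)), ?_⟩
  rintro m ⟨H, -, -, rfl⟩
  exact Finset.card_le_univ _

/-- Upper bound: the shadow of a Berge-G-free 3-graph has at most `3 ex(n,G)` edges. -/
private lemma cover_le_three_mul_turan (n : ℕ) :
    coverTuranNumber {3} n G ≤ 3 * turanNumber n G := by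
  classical
  unfold coverTuranNumber
  set S := { m | ∃ H : Finset (Finset (Fin n)),
    (∀ h ∈ H, h.card ∈ ({3} : Set ℕ)) ∧ ¬ HasBergeCopy G H ∧ m = (covPairs H).card } with hS
  have key : ∀ m ∈ S, m ≤ 3 * turanNumber n G := by
    rintro m ⟨H, hunif, hfree, rfl⟩
    set CP := covPairs H with hCP
    have hmemCP : ∀ p ∈ CP, ∃ h ∈ H, p ⊆ h ∧ p.card = 2 := by
      intro p hp
      rw [hCP, covPairs, Finset.mem_biUnion] at hp
      obtain ⟨h, hh, hph⟩ := hp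
      rw [Finset.mem_powersetCard] at hph
      exact ⟨h, hh, hph.1, hph.2⟩
    have htex : ∀ p : Finset (Fin n), ∃ h, p ∈ CP → (h ∈ H ∧ p ⊆ h) := by
      intro p
      by_cases hp : p ∈ CP
      · obtain ⟨h, hh, hsub, -⟩ := hmemCP p hp
        exact ⟨h, fun _ => ⟨hh, hsub⟩⟩
      · exact ⟨∅, fun hc => absurd hc hp⟩
    choose t htspec using htex
    set H₀ := CP.image t with hH₀
    -- CP.card ≤ 3 * H₀.card
    have hcard1 : CP.card ≤ 3 * H₀.card := by
      apply Finset.card_le_mul_card_image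
      intro b hb
      obtain ⟨p₀, hp₀, rfl⟩ := Finset.mem_image.mp hb
      have hbH : t p₀ ∈ H := (htspec p₀ hp₀).1
      have hb3 : (t p₀).card = 3 := hunif _ hbH
      have hsub : (CP.filter fun p => t p = t p₀) ⊆ Finset.powersetCard 2 (t p₀) := by
        intro p hp
        obtain ⟨hpCP, hpt⟩ := Finset.mem_filter.mp hp
        rw [Finset.mem_powersetCard]
        obtain ⟨h, hh, hsub', hc⟩ := hmemCP p hpCP
        exact ⟨hpt ▸ (htspec p hpCP).2, hc⟩
      calc (CP.filter fun p => t p = t p₀).card ≤ (Finset.powersetCard 2 (t p₀)).card :=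
            Finset.card_le_card hsub
        _ = 3 := by rw [Finset.card_powersetCard, hb3]; decide
    -- section r
    have hrex : ∀ h : Finset (Fin n), ∃ p, h ∈ H₀ → (p ∈ CP ∧ t p = h) := by
      intro h
      by_cases hh : h ∈ H₀
      · obtain ⟨p, hp, hpt⟩ := Finset.mem_image.mp hh
        exact ⟨p, fun _ => ⟨hp, hpt⟩⟩
      · exact ⟨∅, fun hc => absurd hc hh⟩
    choose r hrspec using hrex
    set Fs := H₀.image r with hFs
    have hFsCP : ∀ p ∈ Fs, p ∈ CP := by
      intro p hp
      obtain ⟨h, hh, rfl⟩ := Finset.mem_image.mp hp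
      exact (hrspec h hh).1
    have htr : ∀ h ∈ H₀, t (r h) = h := fun h hh => (hrspec h hh).2
    have hcard2 : Fs.card = H₀.card := by
      rw [hFs]
      apply Finset.card_image_of_injOn
      intro h1 h1m h2 h2m he
      rw [← htr h1 h1m, ← htr h2 h2m, he]
    have htinjFs : ∀ p ∈ Fs, ∀ q ∈ Fs, t p = t q → p = q := by
      intro p hp q hq he
      obtain ⟨h1, hh1, rfl⟩ := Finset.mem_image.mp hp
      obtain ⟨h2, hh2, rfl⟩ := Finset.mem_image.mp hq
      rw [htr h1 hh1, htr h2 hh2] at he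
      rw [he]
    -- the selected graph
    set Fgr : SimpleGraph (Fin n) :=
      { Adj := fun a b => a ≠ b ∧ ({a, b} : Finset (Fin n)) ∈ Fs
        symm := by
          constructor; intro a b hab
          exact ⟨hab.1.symm, Finset.pair_comm a b ▸ hab.2⟩
        loopless := ⟨fun a h => h.1 rfl⟩ } with hFgr
    have hAdj : ∀ a b, Fgr.Adj a b ↔ a ≠ b ∧ ({a, b} : Finset (Fin n)) ∈ Fs := by
      intro a b; rw [hFgr]
    -- G-freeness of Fgr
    have hFfree : ¬ ∃ φ : G →g Fgr, Function.Injective φ := by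
      rintro ⟨φ, hinj⟩
      apply hfree
      refine ⟨φ, fun e => t (pairFinset (e.map φ)), hinj, ?_, ?_, ?_⟩
      · intro e he e' he' hee
        induction e with | _ u v =>
        induction e' with | _ u' v' =>
        rw [SimpleGraph.mem_edgeSet] at he he'
        have h1 : ({φ u, φ v} : Finset (Fin n)) ∈ Fs := ((hAdj _ _).mp (φ.map_adj he)).2
        have h2 : ({φ u', φ v'} : Finset (Fin n)) ∈ Fs := ((hAdj _ _).mp (φ.map_adj he')).2
        simp only [Sym2.map_pair_eq, pairFinset_mk] at hee
        have := htinjFs _ h1 _ h2 hee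
        have hs : s(φ u, φ v) = s(φ u', φ v') := sym2_of_pair_eq this
        rw [Sym2.eq_iff] at hs ⊢
        rcases hs with ⟨h₁, h₂⟩ | ⟨h₁, h₂⟩
        · exact Or.inl ⟨hinj h₁, hinj h₂⟩
        · exact Or.inr ⟨hinj h₁, hinj h₂⟩
      · intro e he
        induction e with | _ u v =>
        rw [SimpleGraph.mem_edgeSet] at he
        have h1 : ({φ u, φ v} : Finset (Fin n)) ∈ Fs := ((hAdj _ _).mp (φ.map_adj he)).2
        simp only [Sym2.map_pair_eq, pairFinset_mk]
        exact (htspec _ (hFsCP _ h1)).1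
      · intro u v huv
        have h1 : ({φ u, φ v} : Finset (Fin n)) ∈ Fs := ((hAdj _ _).mp (φ.map_adj huv)).2
        have hsub := (htspec _ (hFsCP _ h1)).2
        simp only [Sym2.map_pair_eq, pairFinset_mk]
        constructor
        · exact hsub (by simp)
        · exact hsub (by simp)
    -- edge count of Fgr equals Fs.card
    have hcard3 : Fgr.edgeSet.ncard = Fs.card := by
      rw [Set.ncard_eq_toFinset_card _ (Set.toFinite _)]
      apply Finset.card_bij (fun e _ => pairFinset e)
      · intro e he
        rw [Set.Finite.mem_toFinset] at he
        induction e with | _ a b =>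
        rw [SimpleGraph.mem_edgeSet] at he
        exact ((hAdj a b).mp he).2
      · intro e he e' he' hee
        rw [Set.Finite.mem_toFinset] at he he'
        induction e with | _ a b =>
        induction e' with | _ c d =>
        simp only [pairFinset_mk] at hee
        exact sym2_of_pair_eq hee
      · intro p hp
        have hpCP := hFsCP p hp
        obtain ⟨h, hh, hsub', hc⟩ := hmemCP p hpCP
        obtain ⟨a, b, hab, rfl⟩ := Finset.card_eq_two.mp hc
        refine ⟨s(a, b), ?_, by simp⟩
        rw [Set.Finite.mem_toFinset, SimpleGraph.mem_edgeSet]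
        exact (hAdj a b).mpr ⟨hab, hp⟩
    -- chain everything
    have hturan : Fs.card ≤ turanNumber n G := by
      rw [← hcard3]
      exact le_csSup (turan_bdd G n) ⟨Fgr, hFfree, rfl⟩
    calc (covPairs H).card = CP.card := rfl
      _ ≤ 3 * H₀.card := hcard1
      _ = 3 * Fs.card := by rw [hcard2]
      _ ≤ 3 * turanNumber n G := by omega
  by_cases hne : S.Nonempty
  · exact csSup_le hne key
  · rw [Set.not_nonempty_iff_eq_empty.mp hne, csSup_empty]
    exact Nat.zero_le _


private def crossB {V : Type*} [DecidableEq V] (U : Finset V) : Sym2 V → Bool :=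
  Sym2.lift ⟨fun a b => xor (decide (a ∈ U)) (decide (b ∈ U)), fun a b => Bool.xor_comm _ _⟩

@[simp] private lemma crossB_mk {V : Type*} [DecidableEq V] (U : Finset V) (a b : V) :
    crossB U s(a, b) = xor (decide (a ∈ U)) (decide (b ∈ U)) := rfl

private lemma maxcut {V : Type*} [DecidableEq V] (s : Finset V) :
    ∀ (E : Finset (Sym2 V)), (∀ e ∈ E, ¬ e.IsDiag) →
    (∀ e ∈ E, ∀ x ∈ e, x ∈ s) →
    ∃ U : Finset V, U ⊆ s ∧ E.card ≤ 2 * (E.filter fun e => crossB U e).card := by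
  induction s using Finset.induction with
  | empty =>
    intro E hd hs
    refine ⟨∅, subset_rfl, ?_⟩
    have hE : E = ∅ := by
      rw [Finset.eq_empty_iff_forall_notMem]
      intro e he
      exact absurd (hs e he e.out.1 (Sym2.out_fst_mem e)) (Finset.notMem_empty _)
    simp [hE]
  | @insert v s' hv ih =>
    intro E hd hs
    set Ev := E.filter (fun e => v ∈ e) with hEv
    set E' := E.filter (fun e => v ∉ e) with hE'
    have hE'sub : ∀ e ∈ E', ∀ x ∈ e, x ∈ s' := by
      intro e he x hx
      obtain ⟨heE, hve⟩ := Finset.mem_filter.mp he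
      have := hs e heE x hx
      rcases Finset.mem_insert.mp this with rfl | h
      · exact absurd hx hve
      · exact h
    obtain ⟨U', hU's, hU'⟩ := ih E' (fun e he => hd e (Finset.mem_filter.mp he).1) hE'sub
    have hvU' : v ∉ U' := fun h => hv (hU's h)
    -- flip fact on Ev
    have hflip : ∀ e ∈ Ev, crossB (insert v U') e = ! crossB U' e := by
      intro e he
      obtain ⟨heE, hve⟩ := Finset.mem_filter.mp he
      obtain ⟨w, rfl⟩ := Sym2.mem_iff_exists.mp hve
      have hwv : w ≠ v := by
        intro h; exact hd _ heE (by rw [h]; exact Sym2.mk_isDiag_iff.mpr rfl)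
      have h1 : (v ∈ insert v U') = True := by simp
      have h2 : (w ∈ insert v U') = (w ∈ U') := by simp [Finset.mem_insert, hwv]
      have h3 : (v ∈ U') = False := by simp [hvU']
      simp [crossB_mk, h1, h2, h3, Bool.xor_comm]
    -- counts
    have hsplitEv : (Ev.filter fun e => crossB U' e).card
        + (Ev.filter fun e => crossB (insert v U') e).card = Ev.card := by
      have : (Ev.filter fun e => crossB (insert v U') e)
          = (Ev.filter fun e => ¬ (crossB U' e = true)) := by
        apply Finset.filter_congr
        intro e he
        rw [hflip e he]
        simp
      rw [this]
      exact Finset.card_filter_add_card_filter_not _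
    have hsame : ∀ e ∈ E', crossB (insert v U') e = crossB U' e := by
      intro e he
      obtain ⟨heE, hve⟩ := Finset.mem_filter.mp he
      induction e with | _ a b =>
      have hav : a ≠ v := fun h => hve (by rw [h]; exact Sym2.mem_mk_left v b)
      have hbv : b ≠ v := fun h => hve (by rw [h]; exact Sym2.mem_mk_right a v)
      simp [crossB_mk, Finset.mem_insert, hav, hbv]
    -- generic split of filtered counts
    have hgen : ∀ U : Finset V, (E.filter fun e => crossB U e).card
        = (Ev.filter fun e => crossB U e).card + (E'.filter fun e => crossB U e).card := by
      intro U
      rw [hEv, hE', Finset.filter_comm, Finset.filter_comm (fun e => v ∉ e)]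
      exact (Finset.card_filter_add_card_filter_not _).symm
    have hEcard : Ev.card + E'.card = E.card :=
      Finset.card_filter_add_card_filter_not _
    -- choose the better side
    by_cases hc : Ev.card ≤ 2 * (Ev.filter fun e => crossB U' e).card
    · refine ⟨U', hU's.trans (Finset.subset_insert _ _), ?_⟩
      rw [hgen U']
      omega
    · refine ⟨insert v U', Finset.insert_subset_insert _ hU's, ?_⟩
      rw [hgen (insert v U')]
      have hre : (E'.filter fun e => crossB (insert v U') e)
          = (E'.filter fun e => crossB U' e) := by
        apply Finset.filter_congr
        intro e he
        rw [hsame e he]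
      rw [hre]
      omega

private lemma turan_attained (hE : ∃ u v, G.Adj u v) (n : ℕ) :
    ∃ F : SimpleGraph (Fin n), (¬ ∃ φ : G →g F, Function.Injective φ) ∧
      F.edgeSet.ncard = turanNumber n G := by
  have hne : ({m | ∃ F : SimpleGraph (Fin n),
      ¬ (∃ f : G →g F, Function.Injective f) ∧ m = F.edgeSet.ncard}).Nonempty := by
    refine ⟨(⊥ : SimpleGraph (Fin n)).edgeSet.ncard, ⊥, ?_, rfl⟩
    rintro ⟨φ, -⟩
    obtain ⟨u, v, huv⟩ := hE
    exact φ.map_adj huv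
  obtain ⟨F, hF, hcard⟩ := Nat.sSup_mem hne (turan_bdd G n)
  exact ⟨F, hF, hcard.symm⟩

private lemma exists_adj (hconn : G.Connected) (hE : ∃ u v, G.Adj u v) (x : α) :
    ∃ y, G.Adj x y := by
  obtain ⟨u, v, huv⟩ := hE
  by_cases hxu : x = u
  · exact ⟨v, hxu ▸ huv⟩
  · obtain ⟨w⟩ := hconn.preconnected x u
    cases w with
    | nil => exact absurd rfl hxu
    | cons h p => exact ⟨_, h⟩

private lemma turan_shrink (hconn : G.Connected) (hE : ∃ u v, G.Adj u v)
    (n : ℕ) (hn : 16 ≤ n) :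
    turanNumber n G ≤ 15 * turanNumber (2 * ((n + 4) / 5)) G := by
  classical
  set k := (n + 4) / 5 with hk
  set M := 2 * k with hM
  have hkpos : 0 < k := by omega
  obtain ⟨F, hFfree, hFcard⟩ := turan_attained G hE n
  set c : Fin n → Fin 5 := fun v => ⟨v.val % 5, Nat.mod_lt _ (by norm_num)⟩ with hc
  set EF := (Set.toFinite F.edgeSet).toFinset with hEF
  have hEFmem : ∀ e, e ∈ EF ↔ e ∈ F.edgeSet := fun e => Set.Finite.mem_toFinset _
  -- part sizes
  have hpart : ∀ i : Fin 5, (univ.filter (fun v : Fin n => c v = i)).card ≤ k := by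
    intro i
    have : (univ.filter (fun v : Fin n => c v = i)).card ≤ (univ : Finset (Fin k)).card := by
      apply Finset.card_le_card_of_injOn
        (fun v => (⟨v.val / 5, by have := v.isLt; omega⟩ : Fin k))
      · intro v _; exact Finset.mem_univ _
      · intro v hv w hw hvw
        simp only [Finset.coe_filter, Set.mem_setOf_eq] at hv hw
        have h1 : v.val % 5 = i.val := congrArg Fin.val hv.2
        have h2 : w.val % 5 = i.val := congrArg Fin.val hw.2
        have h3 : v.val / 5 = w.val / 5 := congrArg Fin.val hvw
        have : v.val = w.val := by omega
        exact Fin.ext this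
    simpa using this
  -- class vertex sets
  have hSp : ∀ p : Sym2 (Fin 5), (univ.filter (fun v : Fin n => c v ∈ p)).card ≤ M := by
    intro p
    induction p with | _ i j =>
    have hsub : (univ.filter (fun v : Fin n => c v ∈ s(i,j)))
        ⊆ (univ.filter (fun v : Fin n => c v = i)) ∪ (univ.filter (fun v : Fin n => c v = j)) := by
      intro v hv
      obtain ⟨-, hv2⟩ := Finset.mem_filter.mp hv
      rw [Sym2.mem_iff] at hv2
      rcases hv2 with h | h
      · exact Finset.mem_union_left _ (Finset.mem_filter.mpr ⟨Finset.mem_univ _, h⟩)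
      · exact Finset.mem_union_right _ (Finset.mem_filter.mpr ⟨Finset.mem_univ _, h⟩)
    calc (univ.filter (fun v : Fin n => c v ∈ s(i,j))).card
        ≤ _ := Finset.card_le_card hsub
      _ ≤ _ := Finset.card_union_le _ _
      _ ≤ M := by have := hpart i; have := hpart j; omega
  -- per-class bound
  have hclass : ∀ p : Sym2 (Fin 5),
      (EF.filter (fun e => Sym2.map c e = p)).card ≤ turanNumber M G := by
    intro p
    set Sp := (univ.filter (fun v : Fin n => c v ∈ p)) with hSpDef
    have hMpos : 0 < M := by omega
    have hcardS : Fintype.card (↑Sp : Set (Fin n)) ≤ M := by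
      have h1 : Fintype.card (↑Sp : Set (Fin n)) = Sp.card := by simp
      rw [h1]
      exact hSp p
    set emb : (↑Sp : Set (Fin n)) ↪ Fin M :=
      (Fintype.equivFin _).toEmbedding.trans (Fin.castLEEmb hcardS) with hembd
    set Fp : SimpleGraph (Fin M) := SimpleGraph.map emb (F.induce (↑Sp : Set (Fin n)))
      with hFp
    have hFpfree : ¬ ∃ φ : G →g Fp, Function.Injective φ := by
      rintro ⟨φ, hinj⟩
      apply hFfree
      have hrange : ∀ x : α, ∃ u : (↑Sp : Set (Fin n)), emb u = φ x := by
        intro x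
        obtain ⟨y, hxy⟩ := exists_adj G hconn hE x
        obtain ⟨u, v, -, hu, hv⟩ :=
          (SimpleGraph.map_adj emb (F.induce (↑Sp : Set (Fin n))) _ _).mp (φ.map_adj hxy)
        exact ⟨u, hu⟩
      choose inv hinv using hrange
      have hψadj : ∀ x y : α, G.Adj x y → F.Adj ↑(inv x) ↑(inv y) := by
        intro x y hxy
        obtain ⟨u, v, huv, hu, hv⟩ :=
          (SimpleGraph.map_adj emb (F.induce (↑Sp : Set (Fin n))) _ _).mp (φ.map_adj hxy)
        have hux : u = inv x := emb.injective (by rw [hinv, hu])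
        have hvy : v = inv y := emb.injective (by rw [hinv, hv])
        rw [hux, hvy] at huv
        exact huv
      refine ⟨⟨fun x => ↑(inv x), fun hxy => hψadj _ _ hxy⟩, ?_⟩
      intro x y hxy
      have hxy2 : (↑(inv x) : Fin n) = ↑(inv y) := hxy
      have hixy : inv x = inv y := Subtype.ext hxy2
      have h3 : φ x = φ y := by rw [← hinv x, ← hinv y, hixy]
      exact hinj h3
    have hFpmem : Fp.edgeSet.ncard ≤ turanNumber M G :=
      le_csSup (turan_bdd G M) ⟨Fp, hFpfree, rfl⟩
    have hinj2 : (EF.filter (fun e => Sym2.map c e = p)).card ≤ Fp.edgeSet.ncard := by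
      rw [Set.ncard_eq_toFinset_card _ (Set.toFinite _)]
      set g : Fin n → Fin M := fun a => if h : a ∈ Sp then emb ⟨a, Finset.mem_coe.mpr h⟩
        else ⟨0, hMpos⟩ with hg
      have hgS : ∀ a (h : a ∈ Sp), g a = emb ⟨a, Finset.mem_coe.mpr h⟩ := by
        intro a h; rw [hg]; simp [h]
      have hginj : ∀ a ∈ Sp, ∀ b ∈ Sp, g a = g b → a = b := by
        intro a ha b hb hab
        rw [hgS a ha, hgS b hb] at hab
        exact congrArg Subtype.val (emb.injective hab)
      have hmemSp : ∀ {a b : Fin n}, Sym2.map c s(a, b) = p → a ∈ Sp ∧ b ∈ Sp := by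
        intro a b hep
        constructor
        · refine Finset.mem_filter.mpr ⟨Finset.mem_univ _, ?_⟩
          rw [← hep, Sym2.map_pair_eq]
          exact Sym2.mem_mk_left _ _
        · refine Finset.mem_filter.mpr ⟨Finset.mem_univ _, ?_⟩
          rw [← hep, Sym2.map_pair_eq]
          exact Sym2.mem_mk_right _ _
      apply Finset.card_le_card_of_injOn (fun e => Sym2.map g e)
      · intro e he
        obtain ⟨heEF, hep⟩ := Finset.mem_filter.mp he
        rw [Finset.mem_coe, Set.Finite.mem_toFinset]; beta_reduce
        induction e with | _ a b =>
        have hadj : F.Adj a b := (hEFmem _).mp heEF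
        obtain ⟨haS, hbS⟩ := hmemSp hep
        rw [Sym2.map_pair_eq, SimpleGraph.mem_edgeSet, hgS a haS, hgS b hbS]
        exact (SimpleGraph.map_adj emb (F.induce (↑Sp : Set (Fin n))) _ _).mpr
          ⟨⟨a, Finset.mem_coe.mpr haS⟩, ⟨b, Finset.mem_coe.mpr hbS⟩, hadj, rfl, rfl⟩
      · intro e he e' he' hee
        simp only [Finset.coe_filter, Set.mem_setOf_eq] at he he'
        induction e with | _ a b =>
        induction e' with | _ a' b' =>
        obtain ⟨haS, hbS⟩ := hmemSp he.2
        obtain ⟨haS', hbS'⟩ := hmemSp he'.2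
        simp only [Sym2.map_pair_eq, Sym2.eq_iff] at hee ⊢
        rcases hee with ⟨h1, h2⟩ | ⟨h1, h2⟩
        · exact Or.inl ⟨hginj _ haS _ haS' h1, hginj _ hbS _ hbS' h2⟩
        · exact Or.inr ⟨hginj _ haS _ hbS' h1, hginj _ hbS _ haS' h2⟩
    omega
  -- assemble
  have hcover : EF ⊆ univ.biUnion
      (fun p : Sym2 (Fin 5) => EF.filter (fun e => Sym2.map c e = p)) := by
    intro e he
    exact Finset.mem_biUnion.mpr ⟨Sym2.map c e, Finset.mem_univ _,
      Finset.mem_filter.mpr ⟨he, rfl⟩⟩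
  have hcard15 : (univ : Finset (Sym2 (Fin 5))).card = 15 := by
    rw [Finset.card_univ, Sym2.card]
    decide
  have h1 : EF.card ≤ 15 * turanNumber M G := by
    calc EF.card ≤ _ := Finset.card_le_card hcover
      _ ≤ ∑ p ∈ (univ : Finset (Sym2 (Fin 5))), (EF.filter (fun e => Sym2.map c e = p)).card :=
        Finset.card_biUnion_le
      _ ≤ (univ : Finset (Sym2 (Fin 5))).card • turanNumber M G :=
        Finset.sum_le_card_nsmul _ _ _ (fun p _ => hclass p)
      _ = 15 * turanNumber M G := by rw [hcard15, smul_eq_mul]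
  have h2 : turanNumber n G = EF.card := by
    rw [← hFcard, hEF, Set.ncard_eq_toFinset_card _ (Set.toFinite _)]
  rw [h2]
  exact h1

private lemma lower_construction
    (hconn : G.Connected)
    (hbip : ∀ u v : α, G.Adj u v → (u ∈ U ↔ v ∉ U))
    (hC4 : ∀ u v : α, G.Adj u v → ∃ x y : α,
      G.Adj v x ∧ G.Adj x y ∧ G.Adj y u ∧ u ≠ x ∧ v ≠ y)
    (hcommon : ∀ u v : α, u ≠ v → ((u ∈ U ∧ v ∈ U) ∨ (u ∉ U ∧ v ∉ U)) →
      ∃ w : α, G.Adj u w ∧ G.Adj v w)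
    (hE : ∃ u v, G.Adj u v)
    (n M : ℕ) (h2M : 2 * M ≤ n)
    (UB : Finset (Fin M)) (EB : Finset (Sym2 (Fin M)))
    (hor : ∀ e ∈ EB, ∃ p q : Fin M, e = s(p, q) ∧ p ∉ UB ∧ q ∈ UB)
    (hfree : ∀ φ : α → Fin M, Function.Injective φ →
      ¬ (∀ u v, G.Adj u v → s(φ u, φ v) ∈ EB)) :
    EB.card ≤ coverTuranNumber {3} n G := by
  classical
  rcases Finset.eq_empty_or_nonempty EB with rfl | ⟨e₀, he₀⟩
  · simp
  have hM0 : 0 < M := by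
    obtain ⟨p, q, -, -, -⟩ := hor e₀ he₀
    exact p.pos
  have hadj : ∀ x : α, ∃ y, G.Adj x y := exists_adj G hconn hE
  -- the two injections
  set ι₁ : Fin M → Fin n := fun v => ⟨v.val, by have := v.isLt; omega⟩ with hι₁
  set ι₂ : Fin M → Fin n := fun v => ⟨M + v.val, by have := v.isLt; omega⟩ with hι₂
  have h11 : ∀ {v w : Fin M}, ι₁ v = ι₁ w → v = w := by
    intro v w h
    have h' := congrArg Fin.val h
    simp only [hι₁] at h'
    exact Fin.ext h'
  have h22 : ∀ {v w : Fin M}, ι₂ v = ι₂ w → v = w := by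
    intro v w h
    have := congrArg Fin.val h
    simp only [hι₂] at this
    exact Fin.ext (by omega)
  have h12 : ∀ (v w : Fin M), ι₁ v ≠ ι₂ w := by
    intro v w h
    have h' := congrArg Fin.val h
    simp only [hι₁, hι₂] at h'
    have := v.isLt
    omega
  have hval1 : ∀ v : Fin M, (ι₁ v).val = v.val := fun _ => rfl
  have hval2 : ∀ v : Fin M, (ι₂ v).val = M + v.val := fun _ => rfl
  -- orientation choice
  have horex : ∀ e : Sym2 (Fin M), ∃ pq : Fin M × Fin M, e ∈ EB →
      (e = s(pq.1, pq.2) ∧ pq.1 ∉ UB ∧ pq.2 ∈ UB) := by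
    intro e
    by_cases he : e ∈ EB
    · obtain ⟨p, q, h1, h2, h3⟩ := hor e he
      exact ⟨(p, q), fun _ => ⟨h1, h2, h3⟩⟩
    · exact ⟨(⟨0, hM0⟩, ⟨0, hM0⟩), fun hc => absurd hc he⟩
  choose o ospec using horex
  set trip : Sym2 (Fin M) → Finset (Fin n) :=
    fun e => {ι₁ (o e).1, ι₁ (o e).2, ι₂ (o e).2} with htrip
  set H : Finset (Finset (Fin n)) := EB.image trip with hH
  -- structure of hyperedges
  have hHmem : ∀ h ∈ H, ∃ p q : Fin M, p ∉ UB ∧ q ∈ UB ∧ s(p, q) ∈ EB ∧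
      h = {ι₁ p, ι₁ q, ι₂ q} := by
    intro h hh
    obtain ⟨e, he, rfl⟩ := Finset.mem_image.mp hh
    obtain ⟨h1, h2, h3⟩ := ospec e he
    exact ⟨(o e).1, (o e).2, h2, h3, h1 ▸ he, rfl⟩
  have hunif : ∀ h ∈ H, h.card ∈ ({3} : Set ℕ) := by
    intro h hh
    obtain ⟨p, q, hp, hq, -, rfl⟩ := hHmem h hh
    have hpq : p ≠ q := fun hpq' => hp (hpq' ▸ hq)
    have c1 : ι₁ p ≠ ι₁ q := fun hc => hpq (h11 hc)
    have hcard : ({ι₁ p, ι₁ q, ι₂ q} : Finset (Fin n)).card = 3 := by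
      rw [Finset.card_insert_of_notMem (by simp [c1, h12 p q]),
        Finset.card_insert_of_notMem (by simp [h12 q q]), Finset.card_singleton]
    simp [hcard]
  -- the pairs injection
  have hpairs : EB.card ≤ (covPairs H).card := by
    apply Finset.card_le_card_of_injOn
      (fun e => ({ι₁ (o e).1, ι₁ (o e).2} : Finset (Fin n)))
    · intro e he
      rw [covPairs, Finset.mem_coe, Finset.mem_biUnion]
      refine ⟨trip e, Finset.mem_image_of_mem _ he, ?_⟩
      rw [Finset.mem_powersetCard]
      obtain ⟨-, h2, h3⟩ := ospec e he
      have hpq : (o e).1 ≠ (o e).2 := fun hpq' => h2 (hpq' ▸ h3)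
      constructor
      · intro z hz
        rw [htrip]
        simp only [Finset.mem_insert, Finset.mem_singleton] at hz ⊢
        tauto
      · have c1 : ι₁ (o e).1 ≠ ι₁ (o e).2 := fun hc => hpq (h11 hc)
        rw [Finset.card_insert_of_notMem (by simp [c1]), Finset.card_singleton]
    · intro e he e' he' hee
      simp only [Finset.mem_coe] at he he'
      dsimp only at hee
      obtain ⟨heq, hp, hq⟩ := ospec e he
      obtain ⟨heq', hp', hq'⟩ := ospec e' he'
      have m1 : ι₁ (o e).1 ∈ ({ι₁ (o e').1, ι₁ (o e').2} : Finset (Fin n)) := by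
        rw [← hee]; simp
      have m2 : ι₁ (o e).2 ∈ ({ι₁ (o e').1, ι₁ (o e').2} : Finset (Fin n)) := by
        rw [← hee]; simp
      simp only [Finset.mem_insert, Finset.mem_singleton] at m1 m2
      have e1 : (o e).1 = (o e').1 := by
        rcases m1 with h | h
        · exact h11 h
        · exact absurd (h11 h ▸ hq') hp
      have e2 : (o e).2 = (o e').2 := by
        rcases m2 with h | h
        · exact absurd (h11 h ▸ hq) hp'
        · exact h11 h
      rw [heq, heq', e1, e2]
  -- no Berge copy
  have hnoBerge : ¬ HasBergeCopy G H := by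
    rintro ⟨i0, f0, hinj0, hinjOn0, hmem0, hinc0⟩
    have main : ∀ k : ℕ, ∀ i : α → Fin n, ∀ f : Sym2 α → Finset (Fin n),
        Function.Injective i → Set.InjOn f G.edgeSet → (∀ e ∈ G.edgeSet, f e ∈ H) →
        (∀ u v, G.Adj u v → i u ∈ f s(u, v) ∧ i v ∈ f s(u, v)) →
        (univ.filter (fun x => M ≤ (i x).val)).card = k → False := by
      intro k
      induction k using Nat.strong_induction_on with
      | _ k IH =>
      intro i f hinj hinjOn hmem hinc hW
      -- shape of hyperedges assigned to edges
      have S0 : ∀ {x y : α}, G.Adj x y → ∃ p q : Fin M, p ∉ UB ∧ q ∈ UB ∧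
          s(p, q) ∈ EB ∧ f s(x, y) = {ι₁ p, ι₁ q, ι₂ q} := by
        intro x y hxy
        exact hHmem _ (hmem _ (G.mem_edgeSet.mpr hxy))
      -- tail-tail edges are impossible
      have hTT : ∀ {x y : α} {p p' : Fin M}, G.Adj x y → p ∉ UB → p' ∉ UB →
          i x = ι₁ p → i y = ι₁ p' → False := by
        intro x y p p' hxy hp hp' hix hiy
        obtain ⟨a, b, ha, hb, -, hfe⟩ := S0 hxy
        have h1 := (hinc x y hxy).1
        have h2 := (hinc x y hxy).2
        rw [hfe, hix] at h1
        rw [hfe, hiy] at h2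
        simp only [Finset.mem_insert, Finset.mem_singleton] at h1 h2
        have e1 : p = a := by
          rcases h1 with h | h | h
          · exact h11 h
          · exact absurd (h11 h ▸ hb) hp
          · exact absurd h (h12 _ _)
        have e2 : p' = a := by
          rcases h2 with h | h | h
          · exact h11 h
          · exact absurd (h11 h ▸ hb) hp'
          · exact absurd h (h12 _ _)
        have : x = y := hinj (by rw [hix, hiy, e1, e2])
        exact G.irrefl (this ▸ hxy)
      -- neighbours of a clone-vertex
      have hClone : ∀ {x y : α} {v : Fin M}, G.Adj x y → i x = ι₂ v →
          (i y = ι₁ v ∨ ∃ p, p ∉ UB ∧ i y = ι₁ p) := by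
        intro x y v hxy hix
        obtain ⟨a, b, ha, hb, -, hfe⟩ := S0 hxy
        have h1 := (hinc x y hxy).1
        have h2 := (hinc x y hxy).2
        rw [hfe, hix] at h1
        rw [hfe] at h2
        simp only [Finset.mem_insert, Finset.mem_singleton] at h1 h2
        have hvb : v = b := by
          rcases h1 with h | h | h
          · exact absurd h.symm (h12 _ _)
          · exact absurd h.symm (h12 _ _)
          · exact h22 h
        rcases h2 with h | h | h
        · exact Or.inr ⟨a, ha, h⟩
        · exact Or.inl (by rw [h, hvb])
        · exfalso
          have : y = x := hinj (by rw [h, hix, hvb])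
          exact G.irrefl (this ▸ hxy)
      -- neighbours of a head-vertex
      have hHead : ∀ {a y : α} {v : Fin M}, G.Adj a y → v ∈ UB → i a = ι₁ v →
          (i y = ι₂ v ∨ ∃ p, p ∉ UB ∧ i y = ι₁ p) := by
        intro a y v hay hv hia
        obtain ⟨aa, bb, haa, hbb, -, hfe⟩ := S0 hay
        have h1 := (hinc a y hay).1
        have h2 := (hinc a y hay).2
        rw [hfe, hia] at h1
        rw [hfe] at h2
        simp only [Finset.mem_insert, Finset.mem_singleton] at h1 h2
        have hvb : v = bb := by
          rcases h1 with h | h | h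
          · exact absurd (h11 h ▸ hv) haa
          · exact h11 h
          · exact absurd h (h12 _ _)
        rcases h2 with h | h | h
        · exact Or.inr ⟨aa, haa, h⟩
        · exfalso
          have : y = a := hinj (by rw [h, hia, hvb])
          exact G.irrefl (this ▸ hay)
        · exact Or.inl (by rw [h, hvb])
      -- the unique triple containing a given tail and a given clone/head
      have hTriple : ∀ {x w : α} {v p : Fin M}, G.Adj x w → i x = ι₂ v → p ∉ UB →
          i w = ι₁ p → f s(x, w) = {ι₁ p, ι₁ v, ι₂ v} := by
        intro x w v p hxw hix hp hiw
        obtain ⟨a, b, ha, hb, -, hfe⟩ := S0 hxw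
        have h1 := (hinc x w hxw).1
        have h2 := (hinc x w hxw).2
        rw [hfe, hix] at h1
        rw [hfe, hiw] at h2
        simp only [Finset.mem_insert, Finset.mem_singleton] at h1 h2
        have hvb : v = b := by
          rcases h1 with h | h | h
          · exact absurd h.symm (h12 _ _)
          · exact absurd h.symm (h12 _ _)
          · exact h22 h
        have hpa : p = a := by
          rcases h2 with h | h | h
          · exact h11 h
          · exact absurd (h11 h ▸ hb) hp
          · exact absurd h (h12 _ _)
        rw [hfe, hvb, hpa]
      have hTriple' : ∀ {a w : α} {v p : Fin M}, G.Adj a w → v ∈ UB → i a = ι₁ v →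
          p ∉ UB → i w = ι₁ p → f s(a, w) = {ι₁ p, ι₁ v, ι₂ v} := by
        intro a w v p haw hv hia hp hiw
        obtain ⟨aa, bb, haa, hbb, -, hfe⟩ := S0 haw
        have h1 := (hinc a w haw).1
        have h2 := (hinc a w haw).2
        rw [hfe, hia] at h1
        rw [hfe, hiw] at h2
        simp only [Finset.mem_insert, Finset.mem_singleton] at h1 h2
        have hvb : v = bb := by
          rcases h1 with h | h | h
          · exact absurd (h11 h ▸ hv) haa
          · exact h11 h
          · exact absurd h (h12 _ _)
        have hpa : p = aa := by
          rcases h2 with h | h | h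
          · exact h11 h
          · exact absurd (h11 h ▸ hbb) hp
          · exact absurd h (h12 _ _)
        rw [hfe, hvb, hpa]
      by_cases hWk : k = 0
      · -- no clone-vertices: direct embedding into EB
        subst hWk
        have hval : ∀ x : α, (i x).val < M := by
          intro x
          by_contra hge
          have hxW : x ∈ univ.filter (fun x => M ≤ (i x).val) :=
            Finset.mem_filter.mpr ⟨Finset.mem_univ _, by omega⟩
          rw [Finset.card_eq_zero] at hW
          rw [hW] at hxW
          exact Finset.notMem_empty _ hxW
        set φ : α → Fin M := fun x => ⟨(i x).val, hval x⟩ with hφ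
        have hφinj : Function.Injective φ := by
          intro x y hxy
          have hv := congrArg Fin.val hxy
          have hv2 : (i x).val = (i y).val := hv
          exact hinj (Fin.ext hv2)
        apply hfree φ hφinj
        intro u v huv
        obtain ⟨a, b, ha, hb, heEB, hfe⟩ := S0 huv
        have h1 := (hinc u v huv).1
        have h2 := (hinc u v huv).2
        rw [hfe] at h1 h2
        simp only [Finset.mem_insert, Finset.mem_singleton] at h1 h2
        have hne : i u ≠ i v := fun hc => G.irrefl ((hinj hc) ▸ huv)
        have hua : i u = ι₁ a ∨ i u = ι₁ b := by
          rcases h1 with h | h | h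
          · exact Or.inl h
          · exact Or.inr h
          · exfalso; have := congrArg Fin.val h; rw [hval2] at this
            have := hval u; omega
        have hva : i v = ι₁ a ∨ i v = ι₁ b := by
          rcases h2 with h | h | h
          · exact Or.inl h
          · exact Or.inr h
          · exfalso; have := congrArg Fin.val h; rw [hval2] at this
            have := hval v; omega
        have hφeq : ∀ {x : α} {z : Fin M}, i x = ι₁ z → φ x = z := by
          intro x z h
          have hv := congrArg Fin.val h
          exact Fin.ext hv
        rcases hua with hu' | hu' <;> rcases hva with hv' | hv'
        · exact absurd (hu'.trans hv'.symm) hne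
        · rw [hφeq hu', hφeq hv']; exact heEB
        · rw [hφeq hu', hφeq hv', Sym2.eq_swap]; exact heEB
        · exact absurd (hu'.trans hv'.symm) hne
      · -- there is a clone-vertex x
        have hWne : (univ.filter (fun x => M ≤ (i x).val)).Nonempty := by
          rw [← Finset.card_pos, hW]; omega
        obtain ⟨x, hx⟩ := hWne
        have hxval : M ≤ (i x).val := (Finset.mem_filter.mp hx).2
        obtain ⟨y₀, hxy₀⟩ := hadj x
        obtain ⟨a0, b0, ha0, hb0, -, hfe0⟩ := S0 hxy₀
        have h1 := (hinc x y₀ hxy₀).1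
        rw [hfe0] at h1
        simp only [Finset.mem_insert, Finset.mem_singleton] at h1
        have hix : i x = ι₂ b0 := by
          rcases h1 with h | h | h
          · exfalso; have := congrArg Fin.val h; rw [hval1] at this
            have := a0.isLt; omega
          · exfalso; have := congrArg Fin.val h; rw [hval1] at this
            have := b0.isLt; omega
          · exact h
        set v : Fin M := b0 with hv
        have hvUB : v ∈ UB := hb0
        by_cases hpart : ∃ a : α, i a = ι₁ v
        · obtain ⟨a, hia⟩ := hpart
          have hax : a ≠ x := by
            intro h
            rw [h, hix] at hia
            exact h12 v v hia.symm
          by_cases haxadj : G.Adj a x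
          · -- C4 case
            obtain ⟨cc, dd, hxc, hcd, hda, hac, hxd⟩ := hC4 a x haxadj
            obtain hcc | ⟨p, hp, hicc⟩ := hClone hxc hix
            · exact hac (hinj (hia.trans hcc.symm))
            obtain hdd | ⟨p', hp', hidd⟩ := hHead hda.symm hvUB hia
            · exact hxd (hinj (hix.trans hdd.symm))
            exact hTT hcd hp hp' hicc hidd
          · by_cases hside : (a ∈ U ∧ x ∈ U) ∨ (a ∉ U ∧ x ∉ U)
            · -- same side: common neighbour kills injectivity of f
              obtain ⟨w, haw, hxw⟩ := hcommon a x hax hside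
              obtain hw | ⟨p, hp, hiw⟩ := hClone hxw hix
              · exact haw.ne (hinj (hia.trans hw.symm))
              have hT1 : f s(x, w) = {ι₁ p, ι₁ v, ι₂ v} := hTriple hxw hix hp hiw
              have hT2 : f s(a, w) = {ι₁ p, ι₁ v, ι₂ v} := hTriple' haw hvUB hia hp hiw
              have heq := hinjOn (G.mem_edgeSet.mpr hxw)
                (G.mem_edgeSet.mpr haw) (hT1.trans hT2.symm)
              rw [Sym2.eq_iff] at heq
              rcases heq with ⟨h1', -⟩ | ⟨h1', h2'⟩
              · exact hax (h1'.symm)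
              · exact hxw.ne h1'
            · -- opposite sides
              obtain ⟨dd, hadd⟩ := hadj a
              have hddx : dd ≠ x := fun h => haxadj (h ▸ hadd)
              obtain hdd | ⟨pd, hpd, hidd⟩ := hHead hadd hvUB hia
              · exact hddx (hinj (hdd.trans hix.symm))
              have hsame : (dd ∈ U ∧ x ∈ U) ∨ (dd ∉ U ∧ x ∉ U) := by
                have h4 := hbip a dd hadd
                by_cases haU : a ∈ U <;> by_cases hxU : x ∈ U <;>
                  by_cases hdU : dd ∈ U <;> tauto
              obtain ⟨w, hdw, hxw⟩ := hcommon dd x hddx hsame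
              obtain hw | ⟨pw, hpw, hiw⟩ := hClone hxw hix
              · have hwa : w = a := hinj (hw.trans hia.symm)
                exact haxadj (hwa ▸ hxw).symm
              exact hTT hdw hpd hpw hidd hiw
        · -- no partner: re-embed x at the head
          set i' := Function.update i x (ι₁ v) with hi'
          have hinj' : Function.Injective i' := by
            intro y z hyz
            by_cases hy : y = x <;> by_cases hz : z = x
            · rw [hy, hz]
            · rw [hi', hy, Function.update_self, Function.update_of_ne hz] at hyz
              exact absurd ⟨z, hyz.symm⟩ hpart
            · rw [hi', hz, Function.update_of_ne hy, Function.update_self] at hyz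
              exact absurd ⟨y, hyz⟩ hpart
            · rw [hi', Function.update_of_ne hy, Function.update_of_ne hz] at hyz
              exact hinj hyz
          have hmemf : ∀ {w : α}, G.Adj x w → ι₁ v ∈ f s(x, w) := by
            intro w huw
            obtain ⟨aa, bb, haa, hbb, -, hfe⟩ := S0 huw
            have h1' := (hinc _ w huw).1
            rw [hfe, hix] at h1'
            simp only [Finset.mem_insert, Finset.mem_singleton] at h1'
            have hvb : v = bb := by
              rcases h1' with h | h | h
              · exact absurd h.symm (h12 _ _)
              · exact absurd h.symm (h12 _ _)
              · exact h22 h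
            rw [hfe, hvb]
            simp
          have hinc' : ∀ u w, G.Adj u w → i' u ∈ f s(u, w) ∧ i' w ∈ f s(u, w) := by
            intro u w huw
            constructor
            · by_cases hu : u = x
              · have h6 : i' u = ι₁ v := by rw [hi', hu, Function.update_self]
                rw [h6, hu]
                exact hmemf (hu ▸ huw)
              · have h6 : i' u = i u := by rw [hi', Function.update_of_ne hu]
                rw [h6]
                exact (hinc u w huw).1
            · by_cases hw : w = x
              · have h6 : i' w = ι₁ v := by rw [hi', hw, Function.update_self]
                rw [h6, hw]
                have h5 := hmemf ((hw ▸ huw).symm)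
                rwa [Sym2.eq_swap] at h5
              · have h6 : i' w = i w := by rw [hi', Function.update_of_ne hw]
                rw [h6]
                exact (hinc u w huw).2
          have hW' : (univ.filter (fun z => M ≤ (i' z).val)).card = k - 1 := by
            have hset : univ.filter (fun z => M ≤ (i' z).val)
                = (univ.filter (fun z => M ≤ (i z).val)).erase x := by
              ext z
              simp only [Finset.mem_filter, Finset.mem_univ, true_and, Finset.mem_erase]
              constructor
              · intro hz
                have hzx : z ≠ x := by
                  intro h
                  rw [hi', h, Function.update_self] at hz
                  simp only [hι₁] at hz
                  have := v.isLt
                  omega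
                rw [hi', Function.update_of_ne hzx] at hz
                exact ⟨hzx, hz⟩
              · rintro ⟨hzx, hz⟩
                rw [hi', Function.update_of_ne hzx]
                exact hz
            rw [hset, Finset.card_erase_of_mem hx, hW]
          exact IH (k - 1) (by omega) i' f hinj' hinjOn hmem hinc' hW'
    exact main _ i0 f0 hinj0 hinjOn0 hmem0 hinc0 rfl
  have hmemset : (covPairs H).card ∈ { m | ∃ H : Finset (Finset (Fin n)),
      (∀ h ∈ H, h.card ∈ ({3} : Set ℕ)) ∧ ¬ HasBergeCopy G H ∧ m = (covPairs H).card } :=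
    ⟨H, hunif, hnoBerge, rfl⟩
  exact le_trans hpairs (le_csSup (cover_bdd G n) hmemset)


end StmtNineHelpers

set_option maxHeartbeats 1600000 in
open Finset Function in
theorem stmt9 {α : Type*} [Fintype α] (G : SimpleGraph α) (U : Set α)
    (hconn : G.Connected)
    (hbip : ∀ u v : α, G.Adj u v → (u ∈ U ↔ v ∉ U))
    (hC4 : ∀ u v : α, G.Adj u v → ∃ x y : α,
      G.Adj v x ∧ G.Adj x y ∧ G.Adj y u ∧ u ≠ x ∧ v ≠ y)
    (hcommon : ∀ u v : α, u ≠ v → ((u ∈ U ∧ v ∈ U) ∨ (u ∉ U ∧ v ∉ U)) →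
      ∃ w : α, G.Adj u w ∧ G.Adj v w) :
    ∃ c₁ c₂ : ℝ, 0 < c₁ ∧ 0 < c₂ ∧ ∃ n₀ : ℕ, ∀ n ≥ n₀,
      c₁ * (turanNumber n G : ℝ) ≤ (coverTuranNumber {3} n G : ℝ) ∧
      (coverTuranNumber {3} n G : ℝ) ≤ c₂ * (turanNumber n G : ℝ) := by
  classical
  by_cases hE : ∃ u v : α, G.Adj u v
  · refine ⟨1/30, 3, by norm_num, by norm_num, 16, ?_⟩
    intro n hn
    have hup : coverTuranNumber {3} n G ≤ 3 * turanNumber n G := cover_le_three_mul_turan G n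
    set M := 2 * ((n + 4) / 5) with hM
    have h2M : 2 * M ≤ n := by omega
    have hshrink := turan_shrink G hconn hE n hn
    obtain ⟨F, hFfree, hFcard⟩ := turan_attained G hE M
    set E := (Set.toFinite F.edgeSet).toFinset with hEdef
    have hnd : ∀ e ∈ E, ¬ e.IsDiag := by
      intro e he
      rw [hEdef, Set.Finite.mem_toFinset] at he
      exact F.not_isDiag_of_mem_edgeSet he
    have hin : ∀ e ∈ E, ∀ x ∈ e, x ∈ (univ : Finset (Fin M)) := fun _ _ x _ => mem_univ x
    obtain ⟨UB, -, hcut⟩ := maxcut univ E hnd hin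
    set EB := E.filter (fun e => crossB UB e) with hEB
    have hor : ∀ e ∈ EB, ∃ p q : Fin M, e = s(p, q) ∧ p ∉ UB ∧ q ∈ UB := by
      intro e he
      obtain ⟨heE, hc⟩ := Finset.mem_filter.mp he
      induction e with | _ a b =>
      rw [crossB_mk] at hc
      by_cases haU : a ∈ UB
      · by_cases hbU : b ∈ UB
        · exfalso; simp [haU, hbU] at hc
        · exact ⟨b, a, Sym2.eq_swap, hbU, haU⟩
      · by_cases hbU : b ∈ UB
        · exact ⟨a, b, rfl, haU, hbU⟩
        · exfalso; simp [haU, hbU] at hc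
    have hfree : ∀ φ : α → Fin M, Function.Injective φ →
        ¬ (∀ u v, G.Adj u v → s(φ u, φ v) ∈ EB) := by
      intro φ hφ hall
      apply hFfree
      refine ⟨⟨φ, ?_⟩, hφ⟩
      intro u v huv
      have h2 := (Finset.mem_filter.mp (hall u v huv)).1
      rw [hEdef, Set.Finite.mem_toFinset] at h2
      exact F.mem_edgeSet.mp h2
    have hlow := lower_construction G U hconn hbip hC4 hcommon hE n M h2M UB EB hor hfree
    have hEcard : turanNumber M G = E.card := by
      rw [← hFcard, hEdef, Set.ncard_eq_toFinset_card _ (Set.toFinite _)]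
    have hchain : turanNumber n G ≤ 30 * coverTuranNumber {3} n G := by
      calc turanNumber n G ≤ 15 * turanNumber M G := hshrink
        _ = 15 * E.card := by rw [hEcard]
        _ ≤ 30 * coverTuranNumber {3} n G := by omega
    constructor
    · have hc : (turanNumber n G : ℝ) ≤ 30 * (coverTuranNumber {3} n G : ℝ) := by
        exact_mod_cast hchain
      linarith
    · have hc : (coverTuranNumber {3} n G : ℝ) ≤ 3 * (turanNumber n G : ℝ) := by
        exact_mod_cast hup
      linarith
  · -- G has no edges: α is a single vertex and both numbers vanish
    have hα : ∀ x y : α, x = y := by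
      intro x y
      by_contra hxy
      obtain ⟨w⟩ := hconn.preconnected x y
      cases w with
      | nil => exact hxy rfl
      | cons h p => exact hE ⟨_, _, h⟩
    have hES : G.edgeSet = ∅ := by
      rw [Set.eq_empty_iff_forall_notMem]
      intro e he
      induction e with | _ u v =>
      exact hE ⟨u, v, he⟩
    refine ⟨1, 1, one_pos, one_pos, 1, ?_⟩
    intro n hn
    have hn0 : 0 < n := hn
    have hturan : turanNumber n G = 0 := by
      unfold turanNumber
      have hset : {m | ∃ F : SimpleGraph (Fin n),
          ¬ (∃ f : G →g F, Function.Injective f) ∧ m = F.edgeSet.ncard} = (∅ : Set ℕ) := by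
        rw [Set.eq_empty_iff_forall_notMem]
        rintro m ⟨F, hF, -⟩
        apply hF
        refine ⟨⟨fun _ => ⟨0, hn0⟩, ?_⟩, fun x y _ => hα x y⟩
        intro u v huv
        exact absurd ⟨u, v, huv⟩ hE
      rw [hset, csSup_empty]
      rfl
    have hcover : coverTuranNumber {3} n G = 0 := by
      unfold coverTuranNumber
      have hset : { m | ∃ H : Finset (Finset (Fin n)),
          (∀ h ∈ H, h.card ∈ ({3} : Set ℕ)) ∧ ¬ HasBergeCopy G H ∧ m = (covPairs H).card }
          = (∅ : Set ℕ) := by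
        rw [Set.eq_empty_iff_forall_notMem]
        rintro m ⟨H, -, hB, -⟩
        apply hB
        refine ⟨fun _ => ⟨0, hn0⟩, fun _ => ∅, fun x y _ => hα x y, ?_, ?_, ?_⟩
        · rw [hES]
          exact Set.injOn_empty _
        · intro e he
          rw [hES] at he
          exact absurd he (Set.notMem_empty e)
        · intro u v huv
          exact absurd ⟨u, v, huv⟩ hE
      rw [hset, csSup_empty]
      rfl
    rw [hturan, hcover]
    norm_num
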